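/- arXiv:1009.4501 — 3 statements merged into one kernel-verified Lean document; each statement's English description precedes it below -/
import Mathlib

section
/- Fix ω > 0, ε₀ > 0, μ₀ > 0, an integer n ≥ 1, and set k = (ε₀μ₀)^{1/2}; assume j_n(2ω) ≠ 0 and j_n(kω) ≠ 0. Let f, p ∈ ℂ be fixed (boundary datum and interior source coefficient for the n-th mode). For small ρ > 0 define a = f/j_n(2ω), γ(ρ) = (f − p t₁′(ρ) h_n(2ω)) / (t₁(ρ) h_n(2ω) + j_n(2ω)), and c(ρ) = t₁(ρ)γ(ρ) + t₁′(ρ)p. Then as ρ → 0⁺, a − γ(ρ) = O(ρ^{n+1}) and c(ρ) = O(ρ^{n+1}). Hence, with a point source present in the cloaked region, the n-th mode of the boundary-data perturbation is O(ρ^{n+1}) — one order worse in ρ than the source-free rate O(ρ^{2n+1}), but still vanishing as ρ → 0⁺. -/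
/-- The operator `f ↦ (z ↦ f′(z)/z)` used in the Rayleigh formulas. -/
noncomputable def sphDOp (f : ℂ → ℂ) : ℂ → ℂ := fun z => deriv f z / z

/-- Spherical Bessel function of the first kind:
`j_n(z) = (−z)^n (z⁻¹ d/dz)^n (sin z / z)`. -/
noncomputable def sbj (n : ℕ) (z : ℂ) : ℂ :=
  (-z) ^ n * sphDOp^[n] (fun w => Complex.sin w / w) z

/-- Spherical Bessel function of the second kind:
`y_n(z) = −(−z)^n (z⁻¹ d/dz)^n (cos z / z)`. -/
noncomputable def sby (n : ℕ) (z : ℂ) : ℂ :=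
  -((-z) ^ n * sphDOp^[n] (fun w => Complex.cos w / w) z)

/-- Spherical Hankel function of the first kind `h_n = j_n + i y_n`. -/
noncomputable def sbh (n : ℕ) (z : ℂ) : ℂ := sbj n z + Complex.I * sby n z

/-- `𝒥_n(z) = j_n(z) + z j_n′(z)`. -/
noncomputable def sbJ (n : ℕ) (z : ℂ) : ℂ := sbj n z + z * deriv (sbj n) z

/-- `𝓗_n(z) = h_n(z) + z h_n′(z)`. -/
noncomputable def sbH (n : ℕ) (z : ℂ) : ℂ := sbh n z + z * deriv (sbh n) z

/-- `x^{−1/2}` for a positive real `x`, as a complex number. -/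
noncomputable def invSqrtC (x : ℝ) : ℂ := ((Real.sqrt x)⁻¹ : ℝ)

/-- `g(ρ) = O(ρ^s)` as `ρ → 0⁺`. -/
def IsBigORho (g : ℝ → ℂ) (s : ℝ) : Prop :=
  ∃ C : ℝ, 0 < C ∧ ∃ δ : ℝ, 0 < δ ∧
    ∀ ρ : ℝ, 0 < ρ → ρ < δ → ‖g ρ‖ ≤ C * ρ ^ s

/-- The transmission ratio `t₁(ρ)` for the `n`-th mode of the regularized lossless
cloaking problem. -/
noncomputable def t1 (n : ℕ) (ω ε₀ μ₀ k ρ : ℝ) : ℂ :=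
  (invSqrtC ε₀ * (k : ℂ) * sbJ n ((ω * ρ : ℝ) : ℂ) * sbj n ((k * ω : ℝ) : ℂ)
      - invSqrtC μ₀ * (ρ : ℂ) * sbj n ((ω * ρ : ℝ) : ℂ) * sbJ n ((k * ω : ℝ) : ℂ)) /
  (invSqrtC μ₀ * (ρ : ℂ) * sbh n ((ω * ρ : ℝ) : ℂ) * sbJ n ((k * ω : ℝ) : ℂ)
      - invSqrtC ε₀ * (k : ℂ) * sbH n ((ω * ρ : ℝ) : ℂ) * sbj n ((k * ω : ℝ) : ℂ))

/-- The transmission ratio `t₂(ρ)`. -/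
noncomputable def t2 (n : ℕ) (ω ε₀ μ₀ k ρ : ℝ) : ℂ :=
  ((k : ℂ) * (ρ : ℂ) * sbJ n ((ω * ρ : ℝ) : ℂ) * sbh n ((ω * ρ : ℝ) : ℂ)
      - (k : ℂ) * (ρ : ℂ) * sbj n ((ω * ρ : ℝ) : ℂ) * sbH n ((ω * ρ : ℝ) : ℂ)) /
  (invSqrtC μ₀ * (ρ : ℂ) * sbJ n ((k * ω : ℝ) : ℂ) * sbh n ((ω * ρ : ℝ) : ℂ)
      - invSqrtC ε₀ * (k : ℂ) * sbj n ((k * ω : ℝ) : ℂ) * sbH n ((ω * ρ : ℝ) : ℂ))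

/-- The transmission ratio `t₃(ρ)`. -/
noncomputable def t3 (n : ℕ) (ω ε₀ μ₀ k ρ : ℝ) : ℂ :=
  (invSqrtC μ₀ * (k : ℂ) * sbJ n ((ω * ρ : ℝ) : ℂ) * sbj n ((k * ω : ℝ) : ℂ)
      - invSqrtC ε₀ * (ρ : ℂ) * sbj n ((ω * ρ : ℝ) : ℂ) * sbJ n ((k * ω : ℝ) : ℂ)) /
  (invSqrtC ε₀ * (ρ : ℂ) * sbh n ((ω * ρ : ℝ) : ℂ) * sbJ n ((k * ω : ℝ) : ℂ)
      - invSqrtC μ₀ * (k : ℂ) * sbH n ((ω * ρ : ℝ) : ℂ) * sbj n ((k * ω : ℝ) : ℂ))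

/-- The transmission ratio `t₄(ρ)`. -/
noncomputable def t4 (n : ℕ) (ω ε₀ μ₀ k ρ : ℝ) : ℂ :=
  ((ρ : ℂ) * sbJ n ((ω * ρ : ℝ) : ℂ) * sbh n ((ω * ρ : ℝ) : ℂ)
      - (ρ : ℂ) * sbj n ((ω * ρ : ℝ) : ℂ) * sbH n ((ω * ρ : ℝ) : ℂ)) /
  (invSqrtC ε₀ * (ρ : ℂ) * sbJ n ((k * ω : ℝ) : ℂ) * sbh n ((ω * ρ : ℝ) : ℂ)
      - invSqrtC μ₀ * (k : ℂ) * sbj n ((k * ω : ℝ) : ℂ) * sbH n ((ω * ρ : ℝ) : ℂ))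

/-- The source transmission ratio `t₁′(ρ)`. -/
noncomputable def t1' (n : ℕ) (ω ε₀ μ₀ k ρ : ℝ) : ℂ :=
  (sbh n ((k * ω : ℝ) : ℂ) * sbJ n ((k * ω : ℝ) : ℂ)
      - sbH n ((k * ω : ℝ) : ℂ) * sbj n ((k * ω : ℝ) : ℂ)) /
  (invSqrtC μ₀ * (ρ : ℂ) * sbh n ((ω * ρ : ℝ) : ℂ) * sbJ n ((k * ω : ℝ) : ℂ)
      - invSqrtC ε₀ * (k : ℂ) * sbH n ((ω * ρ : ℝ) : ℂ) * sbj n ((k * ω : ℝ) : ℂ))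

/-- The source transmission ratio `t₂′(ρ)`. -/
noncomputable def t2' (n : ℕ) (ω ε₀ μ₀ k ρ : ℝ) : ℂ :=
  (invSqrtC ε₀ * (k : ℂ) * sbh n ((k * ω : ℝ) : ℂ) * sbH n ((ω * ρ : ℝ) : ℂ)
      - invSqrtC μ₀ * (ρ : ℂ) * sbH n ((k * ω : ℝ) : ℂ) * sbh n ((ω * ρ : ℝ) : ℂ)) /
  (invSqrtC μ₀ * (ρ : ℂ) * sbh n ((ω * ρ : ℝ) : ℂ) * sbJ n ((k * ω : ℝ) : ℂ)
      - invSqrtC ε₀ * (k : ℂ) * sbH n ((ω * ρ : ℝ) : ℂ) * sbj n ((k * ω : ℝ) : ℂ))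

/-- The source transmission ratio `t₃′(ρ)`. -/
noncomputable def t3' (n : ℕ) (ω ε₀ μ₀ k ρ : ℝ) : ℂ :=
  (sbJ n ((k * ω : ℝ) : ℂ) * sbh n ((k * ω : ℝ) : ℂ)
      - sbH n ((k * ω : ℝ) : ℂ) * sbj n ((k * ω : ℝ) : ℂ)) /
  (invSqrtC ε₀ * (ρ : ℂ) * sbh n ((ω * ρ : ℝ) : ℂ) * sbJ n ((k * ω : ℝ) : ℂ)
      - invSqrtC μ₀ * (k : ℂ) * sbH n ((ω * ρ : ℝ) : ℂ) * sbj n ((k * ω : ℝ) : ℂ))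

/-- The source transmission ratio `t₄′(ρ)`. -/
noncomputable def t4' (n : ℕ) (ω ε₀ μ₀ k ρ : ℝ) : ℂ :=
  (invSqrtC μ₀ * (k : ℂ) * sbh n ((k * ω : ℝ) : ℂ) * sbH n ((ω * ρ : ℝ) : ℂ)
      - invSqrtC ε₀ * (ρ : ℂ) * sbH n ((k * ω : ℝ) : ℂ) * sbh n ((ω * ρ : ℝ) : ℂ)) /
  (invSqrtC ε₀ * (ρ : ℂ) * sbh n ((ω * ρ : ℝ) : ℂ) * sbJ n ((k * ω : ℝ) : ℂ)
      - invSqrtC μ₀ * (k : ℂ) * sbj n ((k * ω : ℝ) : ℂ) * sbH n ((ω * ρ : ℝ) : ℂ))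

open Complex Filter Set

lemma entire_deriv {f : ℂ → ℂ} (hf : Differentiable ℂ f) : Differentiable ℂ (deriv f) := by
  have h : AnalyticOnNhd ℂ f Set.univ := fun z _ => hf.analyticAt z
  exact fun z => (h.deriv z trivial).differentiableAt

lemma entire_dslope {f : ℂ → ℂ} (hf : Differentiable ℂ f) : Differentiable ℂ (dslope f 0) := by
  rw [← differentiableOn_univ] at hf ⊢
  exact (Complex.differentiableOn_dslope (Filter.univ_mem)).mpr hf

lemma sin_side (m : ℕ) : ∃ V : ℂ → ℂ, Differentiable ℂ V ∧ (∀ z, V (-z) = V z) ∧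
    ∀ z : ℂ, z ≠ 0 → sphDOp^[m] (fun w => Complex.sin w / w) z = V z := by
  induction m with
  | zero =>
      refine ⟨dslope Complex.sin 0, entire_dslope Complex.differentiable_sin, ?_, ?_⟩
      · intro z
        rcases eq_or_ne z 0 with rfl | hz
        · simp
        · rw [dslope_of_ne _ (neg_ne_zero.mpr hz), dslope_of_ne _ hz, slope_def_field,
            slope_def_field]
          simp [Complex.sin_neg, neg_div_neg_eq]
      · intro z hz
        rw [Function.iterate_zero_apply, dslope_of_ne _ hz, slope_def_field]
        simp
  | succ m ih =>
      obtain ⟨V, hVd, hVe, hVeq⟩ := ih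
      have hdV : Differentiable ℂ (deriv V) := entire_deriv hVd
      have hodd : ∀ z, deriv V (-z) = - deriv V z := by
        intro z
        have h1 : (fun z => V (-z)) = V := funext hVe
        have h2 := deriv_comp_neg (f := V) (x := -z)
        rw [h1, neg_neg] at h2
        exact h2
      have h0 : deriv V 0 = 0 := by
        have := hodd 0
        rw [neg_zero] at this
        linear_combination this / 2
      refine ⟨dslope (deriv V) 0, entire_dslope hdV, ?_, ?_⟩
      · intro z
        rcases eq_or_ne z 0 with rfl | hz
        · simp
        · rw [dslope_of_ne _ (neg_ne_zero.mpr hz), dslope_of_ne _ hz, slope_def_field,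
            slope_def_field, hodd, h0]
          simp [neg_div_neg_eq]
      · intro z hz
        rw [Function.iterate_succ_apply']
        show deriv (sphDOp^[m] _) z / z = _
        have hev : sphDOp^[m] (fun w => Complex.sin w / w) =ᶠ[nhds z] V :=
          Filter.eventually_of_mem (isOpen_compl_singleton.mem_nhds hz) (fun w hw => hVeq w hw)
        rw [hev.deriv_eq, dslope_of_ne _ hz, slope_def_field, h0]
        simp

lemma cos_side (m : ℕ) : ∃ U : ℂ → ℂ, Differentiable ℂ U ∧ U 0 ≠ 0 ∧
    ∀ z : ℂ, z ≠ 0 → sphDOp^[m] (fun w => Complex.cos w / w) z = U z / z ^ (2 * m + 1) := by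
  induction m with
  | zero =>
      refine ⟨Complex.cos, Complex.differentiable_cos, by simp, fun z hz => ?_⟩
      simp
  | succ m ih =>
      obtain ⟨U, hUd, hU0, hUeq⟩ := ih
      have hdU : Differentiable ℂ (deriv U) := entire_deriv hUd
      have h21 : (2 * (m : ℂ) + 1) ≠ 0 := by
        have : ((2 * m + 1 : ℕ) : ℂ) ≠ 0 := Nat.cast_ne_zero.mpr (Nat.succ_ne_zero _)
        push_cast at this
        exact this
      refine ⟨fun z => z * deriv U z - (2 * (m : ℂ) + 1) * U z,
        (differentiable_id.mul hdU).sub (hUd.const_mul _), ?_, ?_⟩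
      · simpa using mul_ne_zero h21 hU0
      · intro z hz
        rw [Function.iterate_succ_apply']
        show deriv (sphDOp^[m] _) z / z = _
        have hev : sphDOp^[m] (fun w => Complex.cos w / w) =ᶠ[nhds z]
            (fun w => U w / w ^ (2 * m + 1)) :=
          Filter.eventually_of_mem (isOpen_compl_singleton.mem_nhds hz)
            (fun w hw => hUeq w hw)
        rw [hev.deriv_eq]
        have hpow : HasDerivAt (fun w : ℂ => w ^ (2 * m + 1))
            ((2 * m + 1 : ℕ) * z ^ (2 * m)) z := by
          simpa using hasDerivAt_pow (2 * m + 1) z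
        have hU : HasDerivAt U (deriv U z) z := (hUd z).hasDerivAt
        have hdiv := (hU.div hpow (pow_ne_zero _ hz)).deriv
        rw [show (fun w => U w / w ^ (2 * m + 1)) = U / (fun w => w ^ (2 * m + 1)) from rfl, hdiv]
        field_simp
        push_cast; ring

lemma modelJ (n : ℕ) (hn : 1 ≤ n) (V : ℂ → ℂ) (hVd : Differentiable ℂ V)
    (hVeq : ∀ z : ℂ, z ≠ 0 → sphDOp^[n] (fun w => Complex.sin w / w) z = V z)
    {z : ℂ} (hz : z ≠ 0) :
    sbj n z = (-z)^n * V z ∧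
      sbJ n z = (-z)^n * (((n:ℂ)+1) * V z + z * deriv V z) := by
  have h1 : sbj n z = (-z)^n * V z := by rw [sbj, hVeq z hz]
  have hneg : HasDerivAt (fun w : ℂ => (-w)^n) ((n : ℂ) * (-z)^(n-1) * (-1)) z := by
    exact (hasDerivAt_pow n (-z)).comp z (hasDerivAt_neg z)
  have hM : HasDerivAt (fun w : ℂ => (-w)^n * V w)
      ((n : ℂ) * (-z)^(n-1) * (-1) * V z + (-z)^n * deriv V z) z :=
    hneg.mul (hVd z).hasDerivAt
  have hev : sbj n =ᶠ[nhds z] (fun w => (-w)^n * V w) :=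
    Filter.eventually_of_mem (isOpen_compl_singleton.mem_nhds hz)
      (fun w hw => by rw [sbj, hVeq w hw])
  have hder : deriv (sbj n) z = (n : ℂ) * (-z)^(n-1) * (-1) * V z + (-z)^n * deriv V z := by
    rw [hev.deriv_eq, hM.deriv]
  obtain ⟨m, rfl⟩ : ∃ m, n = m + 1 := ⟨n - 1, by omega⟩
  refine ⟨h1, ?_⟩
  rw [sbJ, h1, hder]
  simp only [Nat.add_sub_cancel]
  push_cast
  ring

lemma modelH (n : ℕ) (hn : 1 ≤ n) (V U : ℂ → ℂ) (hVd : Differentiable ℂ V)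
    (hUd : Differentiable ℂ U)
    (hVeq : ∀ z : ℂ, z ≠ 0 → sphDOp^[n] (fun w => Complex.sin w / w) z = V z)
    (hUeq : ∀ z : ℂ, z ≠ 0 → sphDOp^[n] (fun w => Complex.cos w / w) z = U z / z ^ (2 * n + 1))
    {z : ℂ} (hz : z ≠ 0) :
    sbh n z = (-z)^n * V z - Complex.I * ((-z)^n * U z / z^(2*n+1)) ∧
      sbH n z = (-z)^n * (((n:ℂ)+1) * V z + z * deriv V z)
        + Complex.I * ((-z)^n * (((n:ℂ)) * U z - z * deriv U z) / z^(2*n+1)) := by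
  have hfor : ∀ w : ℂ, w ≠ 0 → sbh n w
      = (-w)^n * V w - Complex.I * ((-w)^n * (U w / w^(2*n+1))) := by
    intro w hw
    rw [sbh, sbj, sby, hVeq w hw, hUeq w hw]
    ring
  have h1 : sbh n z = (-z)^n * V z - Complex.I * ((-z)^n * U z / z^(2*n+1)) := by
    rw [hfor z hz]; ring
  have hneg : HasDerivAt (fun w : ℂ => (-w)^n) ((n : ℂ) * (-z)^(n-1) * (-1)) z :=
    (hasDerivAt_pow n (-z)).comp z (hasDerivAt_neg z)
  have hpow : HasDerivAt (fun w : ℂ => w ^ (2*n+1)) ((2*n+1 : ℕ) * z ^ (2*n)) z := by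
    simpa using hasDerivAt_pow (2*n+1) z
  have hq : HasDerivAt (fun w : ℂ => U w / w^(2*n+1))
      ((deriv U z * z^(2*n+1) - U z * ((2*n+1 : ℕ) * z ^ (2*n))) / (z^(2*n+1))^2) z :=
    (hUd z).hasDerivAt.div hpow (pow_ne_zero _ hz)
  have hM : HasDerivAt (fun w : ℂ => (-w)^n * V w - Complex.I * ((-w)^n * (U w / w^(2*n+1))))
      (((n : ℂ) * (-z)^(n-1) * (-1) * V z + (-z)^n * deriv V z)
        - Complex.I * (((n : ℂ) * (-z)^(n-1) * (-1)) * (U z / z^(2*n+1))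
            + (-z)^n * ((deriv U z * z^(2*n+1) - U z * ((2*n+1 : ℕ) * z ^ (2*n))) / (z^(2*n+1))^2))) z :=
    (hneg.mul (hVd z).hasDerivAt).sub ((hneg.mul hq).const_mul Complex.I)
  have hev : sbh n =ᶠ[nhds z]
      (fun w => (-w)^n * V w - Complex.I * ((-w)^n * (U w / w^(2*n+1)))) :=
    Filter.eventually_of_mem (isOpen_compl_singleton.mem_nhds hz)
      (fun w hw => hfor w hw)
  have hder := hev.deriv_eq.trans hM.deriv
  obtain ⟨m, rfl⟩ : ∃ m, n = m + 1 := ⟨n - 1, by omega⟩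
  refine ⟨h1, ?_⟩
  rw [sbH, h1, hder]
  simp only [Nat.add_sub_cancel]
  push_cast
  field_simp
  ring

set_option maxHeartbeats 2000000 in
/-- With a point source of radiating coefficient `p` in the cloaked
region, the exterior coefficients `γ(ρ) = (f − p t₁′(ρ)h_n(2ω))/(t₁(ρ)h_n(2ω)+j_n(2ω))`
and `c(ρ) = t₁(ρ)γ(ρ) + t₁′(ρ)p` satisfy `a − γ(ρ) = O(ρ^{n+1})` and
`c(ρ) = O(ρ^{n+1})`: the boundary-data perturbation still vanishes as `ρ → 0⁺`, but one
order worse in `ρ` than the source-free rate `O(ρ^{2n+1})`. -/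
theorem boundary_perturbation_with_source
    (ω ε₀ μ₀ : ℝ) (hω : 0 < ω) (hε : 0 < ε₀) (hμ : 0 < μ₀)
    (n : ℕ) (hn : 1 ≤ n) (k : ℝ) (hk : k = Real.sqrt (ε₀ * μ₀))
    (hj2 : sbj n ((2 * ω : ℝ) : ℂ) ≠ 0) (hjk : sbj n ((k * ω : ℝ) : ℂ) ≠ 0)
    (f p : ℂ)
    (a : ℂ) (ha : a = f / sbj n ((2 * ω : ℝ) : ℂ))
    (γ : ℝ → ℂ) (hγ : ∀ ρ : ℝ, γ ρ =
      (f - p * t1' n ω ε₀ μ₀ k ρ * sbh n ((2 * ω : ℝ) : ℂ)) /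
        (t1 n ω ε₀ μ₀ k ρ * sbh n ((2 * ω : ℝ) : ℂ) + sbj n ((2 * ω : ℝ) : ℂ)))
    (c : ℝ → ℂ) (hc : ∀ ρ : ℝ, c ρ = t1 n ω ε₀ μ₀ k ρ * γ ρ + t1' n ω ε₀ μ₀ k ρ * p) :
    IsBigORho (fun ρ => a - γ ρ) ((n : ℝ) + 1) ∧
    IsBigORho c ((n : ℝ) + 1) := by
  obtain ⟨V, hVd, hVe, hVeq⟩ := sin_side n
  obtain ⟨U, hUd, hU0, hUeq⟩ := cos_side n
  have hVc : Continuous V := hVd.continuous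
  have hUc : Continuous U := hUd.continuous
  have hdVc : Continuous (deriv V) := (entire_deriv hVd).continuous
  have hdUc : Continuous (deriv U) := (entire_deriv hUd).continuous
  have hk0 : 0 < k := by rw [hk]; exact Real.sqrt_pos.mpr (mul_pos hε hμ)
  have hωC : ((ω : ℝ) : ℂ) ≠ 0 := Complex.ofReal_ne_zero.mpr (ne_of_gt hω)
  have hkC : ((k : ℝ) : ℂ) ≠ 0 := Complex.ofReal_ne_zero.mpr (ne_of_gt hk0)
  have hiε : invSqrtC ε₀ ≠ 0 := by
    simp only [invSqrtC, Complex.ofReal_ne_zero]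
    positivity
  have hiμ : invSqrtC μ₀ ≠ 0 := by
    simp only [invSqrtC, Complex.ofReal_ne_zero]
    positivity
  have hnC : ((n : ℕ) : ℂ) ≠ 0 := Nat.cast_ne_zero.mpr (by omega)
  -- abbreviations
  set j2 : ℂ := sbj n ((2 * ω : ℝ) : ℂ) with hj2def
  set h2 : ℂ := sbh n ((2 * ω : ℝ) : ℂ) with hh2def
  set cj : ℂ := sbj n ((k * ω : ℝ) : ℂ) with hcjdef
  set cJ : ℂ := sbJ n ((k * ω : ℝ) : ℂ) with hcJdef
  set W0 : ℂ := sbh n ((k * ω : ℝ) : ℂ) * sbJ n ((k * ω : ℝ) : ℂ)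
      - sbH n ((k * ω : ℝ) : ℂ) * sbj n ((k * ω : ℝ) : ℂ) with hW0def
  set β : ℂ := Complex.I * (-(ω:ℂ))^n / (ω:ℂ)^(2*n+1) with hβdef
  have hβ0 : β ≠ 0 := by
    rw [hβdef]
    exact div_ne_zero (mul_ne_zero Complex.I_ne_zero (pow_ne_zero _ (neg_ne_zero.mpr hωC)))
      (pow_ne_zero _ hωC)
  set Dh : ℝ → ℂ := fun ρ =>
    invSqrtC μ₀ * cJ * ((-(ω:ℂ))^n * (ρ:ℂ)^(2*n+2) * V ((ω:ℂ)*(ρ:ℂ))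
        - β * (ρ:ℂ) * U ((ω:ℂ)*(ρ:ℂ)))
    - invSqrtC ε₀ * (k:ℂ) * cj * ((-(ω:ℂ))^n * (ρ:ℂ)^(2*n+1)
          * (((n:ℂ)+1) * V ((ω:ℂ)*(ρ:ℂ)) + (ω:ℂ)*(ρ:ℂ) * deriv V ((ω:ℂ)*(ρ:ℂ)))
        + β * ((n:ℂ) * U ((ω:ℂ)*(ρ:ℂ)) - (ω:ℂ)*(ρ:ℂ) * deriv U ((ω:ℂ)*(ρ:ℂ)))) with hDhdef
  set Nh : ℝ → ℂ := fun ρ =>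
    invSqrtC ε₀ * (k:ℂ) * cj * ((-(ω:ℂ))^n
        * (((n:ℂ)+1) * V ((ω:ℂ)*(ρ:ℂ)) + (ω:ℂ)*(ρ:ℂ) * deriv V ((ω:ℂ)*(ρ:ℂ))))
    - invSqrtC μ₀ * cJ * ((ρ:ℂ) * (-(ω:ℂ))^n * V ((ω:ℂ)*(ρ:ℂ))) with hNhdef
  have hwC : Continuous (fun ρ : ℝ => (ω:ℂ)*(ρ:ℂ)) :=
    continuous_const.mul Complex.continuous_ofReal
  have hDhc : Continuous Dh := by
    rw [hDhdef]
    fun_prop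
  have hNhc : Continuous Nh := by
    rw [hNhdef]
    fun_prop
  have hDh0 : Dh 0 = - (invSqrtC ε₀ * (k:ℂ) * cj * (β * ((n:ℂ) * U 0))) := by
    rw [hDhdef]
    simp [pow_succ]
  have hDh0ne : Dh 0 ≠ 0 := by
    rw [hDh0]
    simp only [neg_ne_zero]
    exact mul_ne_zero (mul_ne_zero (mul_ne_zero hiε hkC) hjk) (mul_ne_zero hβ0 (mul_ne_zero hnC hU0))
  -- per-rho formulas
  have key : ∀ ρ : ℝ, 0 < ρ → Dh ρ ≠ 0 →
      t1 n ω ε₀ μ₀ k ρ = (ρ:ℂ)^(2*n+1) * Nh ρ / Dh ρ ∧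
      t1' n ω ε₀ μ₀ k ρ = (ρ:ℂ)^(n+1) * W0 / Dh ρ := by
    intro ρ hρ hDne
    have hz : ((ω * ρ : ℝ) : ℂ) ≠ 0 :=
      Complex.ofReal_ne_zero.mpr (ne_of_gt (mul_pos hω hρ))
    have hrC : ((ρ : ℝ) : ℂ) ≠ 0 := Complex.ofReal_ne_zero.mpr (ne_of_gt hρ)
    obtain ⟨hjeq, hJeq⟩ := modelJ n hn V hVd hVeq hz
    obtain ⟨hheq, hHeq⟩ := modelH n hn V U hVd hUd hVeq hUeq hz
    have hNum : invSqrtC ε₀ * (k:ℂ) * sbJ n ((ω * ρ : ℝ) : ℂ) * cj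
        - invSqrtC μ₀ * (ρ:ℂ) * sbj n ((ω * ρ : ℝ) : ℂ) * cJ = (ρ:ℂ)^n * Nh ρ := by
      rw [hjeq, hJeq, hNhdef]
      push_cast
      ring
    have hDen : invSqrtC μ₀ * (ρ:ℂ) * sbh n ((ω * ρ : ℝ) : ℂ) * cJ
        - invSqrtC ε₀ * (k:ℂ) * sbH n ((ω * ρ : ℝ) : ℂ) * cj = Dh ρ / (ρ:ℂ)^(n+1) := by
      rw [hheq, hHeq, hDhdef, hβdef]
      push_cast
      field_simp
      ring
    constructor
    · rw [t1, ← hcjdef, ← hcJdef, hNum, hDen]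
      field_simp
      ring
    · rw [t1', ← hcjdef, ← hcJdef, ← hW0def, hDen]
      field_simp
  -- continuity constants
  set d : ℝ := ‖Dh 0‖ with hddef
  have hd0 : 0 < d := by
    rw [hddef]
    exact norm_pos_iff.mpr hDh0ne
  set Nb : ℝ := ‖Nh 0‖ + 1 with hNbdef
  have hNb0 : 0 < Nb := by positivity
  obtain ⟨δ₁, hδ₁pos, hδ₁⟩ := Metric.continuousAt_iff.mp hDhc.continuousAt (d/2) (by positivity)
  obtain ⟨δ₂, hδ₂pos, hδ₂⟩ := Metric.continuousAt_iff.mp hNhc.continuousAt 1 one_pos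
  set C₁ : ℝ := 2 * Nb / d with hC₁def
  have hC₁0 : 0 < C₁ := by positivity
  set C₂ : ℝ := 2 * ‖W0‖ / d with hC₂def
  have hC₂0 : 0 ≤ C₂ := by positivity
  set aj2 : ℝ := ‖j2‖ with haj2def
  have haj2 : 0 < aj2 := norm_pos_iff.mpr hj2
  set ah2 : ℝ := ‖h2‖ with hah2def
  set δ₃ : ℝ := aj2 / (2 * (C₁ + 1) * (ah2 + 1)) with hδ₃def
  have hah2nn : 0 ≤ ah2 := norm_nonneg _
  have hδ₃pos : 0 < δ₃ := by positivity
  set δ : ℝ := min 1 (min δ₁ (min δ₂ δ₃)) with hδdef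
  have hδpos : 0 < δ := by positivity
  -- per-rho bounds
  have bounds : ∀ ρ : ℝ, 0 < ρ → ρ < δ →
      ‖t1 n ω ε₀ μ₀ k ρ‖ ≤ C₁ * ρ^(2*n+1) ∧
      ‖t1' n ω ε₀ μ₀ k ρ‖ ≤ C₂ * ρ^(n+1) := by
    intro ρ hρ hρδ
    have hρ1 : ρ < 1 := lt_of_lt_of_le hρδ (by rw [hδdef]; exact min_le_left _ _)
    have hρδ₁ : ρ < δ₁ := lt_of_lt_of_le hρδ (by rw [hδdef]; exact le_trans (min_le_right _ _) (min_le_left _ _))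
    have hρδ₂ : ρ < δ₂ := lt_of_lt_of_le hρδ (by
      rw [hδdef]
      exact le_trans (min_le_right _ _) (le_trans (min_le_right _ _) (min_le_left _ _)))
    have hdist1 : dist ρ (0:ℝ) < δ₁ := by
      rw [Real.dist_eq, sub_zero, abs_of_pos hρ]; exact hρδ₁
    have hdist2 : dist ρ (0:ℝ) < δ₂ := by
      rw [Real.dist_eq, sub_zero, abs_of_pos hρ]; exact hρδ₂
    have hDhρ : d / 2 ≤ ‖Dh ρ‖ := by
      have h1 := hδ₁ hdist1
      rw [Complex.dist_eq] at h1
      have h2' := norm_sub_norm_le (Dh 0) (Dh ρ)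
      have : ‖Dh 0 - Dh ρ‖ = ‖Dh ρ - Dh 0‖ := norm_sub_rev _ _
      rw [this] at h2'
      rw [← hddef] at h2'
      linarith
    have hDhρne : Dh ρ ≠ 0 := by
      intro h
      rw [h] at hDhρ
      simp at hDhρ
      linarith
    have hNhρ : ‖Nh ρ‖ ≤ Nb := by
      have h1 := hδ₂ hdist2
      rw [Complex.dist_eq] at h1
      have h2' := norm_sub_norm_le (Nh ρ) (Nh 0)
      rw [hNbdef]
      linarith
    obtain ⟨ht1eq, ht1'eq⟩ := key ρ hρ hDhρne
    constructor
    · rw [ht1eq, norm_div, norm_mul, norm_pow, Complex.norm_real, Real.norm_eq_abs, _root_.abs_of_pos hρ]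
      calc ρ^(2*n+1) * ‖Nh ρ‖ / ‖Dh ρ‖
          ≤ ρ^(2*n+1) * Nb / (d/2) := by
            gcongr
        _ = C₁ * ρ^(2*n+1) := by rw [hC₁def]; field_simp
    · rw [ht1'eq, norm_div, norm_mul, norm_pow, Complex.norm_real, Real.norm_eq_abs, _root_.abs_of_pos hρ]
      calc ρ^(n+1) * ‖W0‖ / ‖Dh ρ‖
          ≤ ρ^(n+1) * ‖W0‖ / (d/2) := by
            gcongr
        _ = C₂ * ρ^(n+1) := by rw [hC₂def]; field_simp
  -- denominator lower bound
  have den2bd : ∀ ρ : ℝ, 0 < ρ → ρ < δ →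
      aj2 / 2 ≤ ‖t1 n ω ε₀ μ₀ k ρ * h2 + j2‖ ∧
      (t1 n ω ε₀ μ₀ k ρ * h2 + j2) ≠ 0 := by
    intro ρ hρ hρδ
    obtain ⟨hb1, _⟩ := bounds ρ hρ hρδ
    have hρ1 : ρ < 1 := lt_of_lt_of_le hρδ (by rw [hδdef]; exact min_le_left _ _)
    have hρδ₃ : ρ < δ₃ := lt_of_lt_of_le hρδ (by
      rw [hδdef]
      exact le_trans (min_le_right _ _) (le_trans (min_le_right _ _) (min_le_right _ _)))
    have hpow : ρ^(2*n+1) ≤ ρ := by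
      calc ρ^(2*n+1) ≤ ρ^1 := pow_le_pow_of_le_one hρ.le hρ1.le (by omega)
        _ = ρ := pow_one ρ
    have hsmall : ‖t1 n ω ε₀ μ₀ k ρ * h2‖ ≤ aj2 / 2 := by
      rw [norm_mul]
      calc ‖t1 n ω ε₀ μ₀ k ρ‖ * ‖h2‖
          ≤ (C₁ * ρ^(2*n+1)) * ah2 := by
            rw [hah2def]
            gcongr
        _ ≤ (C₁ + 1) * ρ * (ah2 + 1) := by
            have h1 : C₁ * ρ^(2*n+1) ≤ (C₁+1) * ρ := by
              calc C₁ * ρ^(2*n+1) ≤ C₁ * ρ := by gcongr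
                _ ≤ (C₁+1) * ρ := by nlinarith
            nlinarith [norm_nonneg h2, hρ.le]
        _ ≤ (C₁ + 1) * δ₃ * (ah2 + 1) := by gcongr
        _ = aj2 / 2 := by
            rw [hδ₃def]
            field_simp
    have htri : aj2 - aj2/2 ≤ ‖t1 n ω ε₀ μ₀ k ρ * h2 + j2‖ := by
      have h2' := norm_sub_le (t1 n ω ε₀ μ₀ k ρ * h2 + j2) (t1 n ω ε₀ μ₀ k ρ * h2)
      simp only [add_sub_cancel_left] at h2'
      rw [← haj2def] at h2'
      linarith
    refine ⟨by linarith, ?_⟩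
    intro h
    rw [h] at htri
    simp at htri
    linarith
  constructor
  · -- a - γ = O(ρ^{n+1})
    refine ⟨(‖a‖ * ah2 * C₁ + ‖p‖ * ah2 * C₂) * 2 / aj2 + 1, by positivity,
      δ, hδpos, ?_⟩
    intro ρ hρ hρδ
    obtain ⟨hb1, hb2⟩ := bounds ρ hρ hρδ
    obtain ⟨hden2, hden2ne⟩ := den2bd ρ hρ hρδ
    have hρ1 : ρ < 1 := lt_of_lt_of_le hρδ (by rw [hδdef]; exact min_le_left _ _)
    have hpow2 : ρ^(2*n+1) ≤ ρ^(n+1) := pow_le_pow_of_le_one hρ.le hρ1.le (by omega)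
    have hrpow : ρ ^ ((n:ℝ)+1) = ρ^(n+1) := by
      rw [show ((n:ℝ)+1) = ((n+1:ℕ):ℝ) by push_cast; ring, Real.rpow_natCast]
    have hkey : a - γ ρ = (a * (t1 n ω ε₀ μ₀ k ρ * h2) + p * t1' n ω ε₀ μ₀ k ρ * h2) /
        (t1 n ω ε₀ μ₀ k ρ * h2 + j2) := by
      rw [hγ ρ, ha]
      field_simp [hj2, hden2ne]
      rw [show h2 * t1 n ω ε₀ μ₀ k ρ + j2 = t1 n ω ε₀ μ₀ k ρ * h2 + j2 by ring, eq_div_iff hden2ne, sub_mul,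
        div_mul_cancel₀ _ hden2ne]
      ring
    show ‖a - γ ρ‖ ≤ _
    rw [hrpow, hkey, norm_div]
    have hnum : ‖a * (t1 n ω ε₀ μ₀ k ρ * h2) + p * t1' n ω ε₀ μ₀ k ρ * h2‖
        ≤ (‖a‖ * ah2 * C₁ + ‖p‖ * ah2 * C₂) * ρ^(n+1) := by
      calc ‖a * (t1 n ω ε₀ μ₀ k ρ * h2) + p * t1' n ω ε₀ μ₀ k ρ * h2‖
          ≤ ‖a * (t1 n ω ε₀ μ₀ k ρ * h2)‖
            + ‖p * t1' n ω ε₀ μ₀ k ρ * h2‖ := norm_add_le _ _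
        _ = ‖a‖ * ‖t1 n ω ε₀ μ₀ k ρ‖ * ah2
            + ‖p‖ * ‖t1' n ω ε₀ μ₀ k ρ‖ * ah2 := by
            rw [hah2def]; simp [map_mul]; try ring
        _ ≤ ‖a‖ * (C₁ * ρ^(2*n+1)) * ah2
            + ‖p‖ * (C₂ * ρ^(n+1)) * ah2 := by
            gcongr <;> exact norm_nonneg _
        _ ≤ ‖a‖ * (C₁ * ρ^(n+1)) * ah2
            + ‖p‖ * (C₂ * ρ^(n+1)) * ah2 := by
            gcongr
        _ = (‖a‖ * ah2 * C₁ + ‖p‖ * ah2 * C₂) * ρ^(n+1) := by ring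
    calc ‖a * (t1 n ω ε₀ μ₀ k ρ * h2) + p * t1' n ω ε₀ μ₀ k ρ * h2‖ /
          ‖t1 n ω ε₀ μ₀ k ρ * h2 + j2‖
        ≤ ((‖a‖ * ah2 * C₁ + ‖p‖ * ah2 * C₂) * ρ^(n+1)) / (aj2/2) :=
          div_le_div₀ (by positivity) hnum (by positivity) hden2
        _ = ((‖a‖ * ah2 * C₁ + ‖p‖ * ah2 * C₂) * 2 / aj2) * ρ^(n+1) := by
          field_simp
        _ ≤ ((‖a‖ * ah2 * C₁ + ‖p‖ * ah2 * C₂) * 2 / aj2 + 1) * ρ^(n+1) := by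
          gcongr <;> first | positivity | linarith
  · -- c = O(ρ^{n+1})
    set Γ : ℝ := (‖f‖ + ‖p‖ * C₂ * (ah2 + 1) + 1) * 2 / aj2 with hΓdef
    have hΓ0 : 0 ≤ Γ := by positivity
    refine ⟨C₁ * Γ + C₂ * (‖p‖ + 1) + 1, by positivity, δ, hδpos, ?_⟩
    intro ρ hρ hρδ
    obtain ⟨hb1, hb2⟩ := bounds ρ hρ hρδ
    obtain ⟨hden2, hden2ne⟩ := den2bd ρ hρ hρδ
    have hρ1 : ρ < 1 := lt_of_lt_of_le hρδ (by rw [hδdef]; exact min_le_left _ _)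
    have hpow2 : ρ^(2*n+1) ≤ ρ^(n+1) := pow_le_pow_of_le_one hρ.le hρ1.le (by omega)
    have hpow3 : ρ^(n+1) ≤ 1 := pow_le_one₀ hρ.le hρ1.le
    have hrpow : ρ ^ ((n:ℝ)+1) = ρ^(n+1) := by
      rw [show ((n:ℝ)+1) = ((n+1:ℕ):ℝ) by push_cast; ring, Real.rpow_natCast]
    have hγbd : ‖γ ρ‖ ≤ Γ := by
      rw [hγ ρ, norm_div]
      calc ‖f - p * t1' n ω ε₀ μ₀ k ρ * h2‖ /
            ‖t1 n ω ε₀ μ₀ k ρ * h2 + j2‖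
          ≤ (‖f‖ + ‖p‖ * C₂ * (ah2 + 1) + 1) / (aj2/2) := by
            refine div_le_div₀ (by positivity) ?_ (by positivity) hden2
            calc ‖f - p * t1' n ω ε₀ μ₀ k ρ * h2‖
                  ≤ ‖f‖ + ‖p * t1' n ω ε₀ μ₀ k ρ * h2‖ :=
                    norm_sub_le _ _
                _ = ‖f‖ + ‖p‖ * ‖t1' n ω ε₀ μ₀ k ρ‖ * ah2 := by
                    rw [hah2def]; simp [map_mul]; try ring
                _ ≤ ‖f‖ + ‖p‖ * (C₂ * ρ^(n+1)) * (ah2 + 1) := by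
                    gcongr <;> first | positivity | linarith
                _ ≤ ‖f‖ + ‖p‖ * C₂ * (ah2 + 1) + 1 := by
                    have h1 : C₂ * ρ^(n+1) ≤ C₂ := by
                      calc C₂ * ρ^(n+1) ≤ C₂ * 1 := by gcongr
                        _ = C₂ := mul_one _
                    have h2'' : ‖p‖ * (C₂ * ρ^(n+1)) * (ah2 + 1)
                        ≤ ‖p‖ * C₂ * (ah2 + 1) := by
                      gcongr
                    linarith
          _ = Γ := by rw [hΓdef]; field_simp
    rw [hrpow, hc ρ]
    calc ‖t1 n ω ε₀ μ₀ k ρ * γ ρ + t1' n ω ε₀ μ₀ k ρ * p‖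
        ≤ ‖t1 n ω ε₀ μ₀ k ρ‖ * ‖γ ρ‖
          + ‖t1' n ω ε₀ μ₀ k ρ‖ * ‖p‖ := by
          calc ‖t1 n ω ε₀ μ₀ k ρ * γ ρ + t1' n ω ε₀ μ₀ k ρ * p‖
              ≤ ‖t1 n ω ε₀ μ₀ k ρ * γ ρ‖
                + ‖t1' n ω ε₀ μ₀ k ρ * p‖ := norm_add_le _ _
            _ = _ := by simp [map_mul]
      _ ≤ (C₁ * ρ^(2*n+1)) * Γ + (C₂ * ρ^(n+1)) * (‖p‖ + 1) := by
          gcongr <;> first | positivity | linarith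
      _ ≤ (C₁ * ρ^(n+1)) * Γ + (C₂ * ρ^(n+1)) * (‖p‖ + 1) := by gcongr
      _ ≤ (C₁ * Γ + C₂ * (‖p‖ + 1) + 1) * ρ^(n+1) := by nlinarith [pow_nonneg hρ.le (n+1)]
end

section
/- Fix ω > 0, ε₀ > 0, μ₀ > 0, an integer n ≥ 1, and set k = (ε₀μ₀)^{1/2}; assume j_n(kω) ≠ 0, and let t₂′(ρ) and t₄′(ρ) be as defined from the transmission conditions with an interior point source. Then as ρ → 0⁺: (i) t₂′(ρ) j_n(kω) + h_n(kω) = O(ρ); and (ii) t₄′(ρ) 𝒥_n(kω) + 𝓗_n(kω) converges to i/(kω j_n(kω)), which is nonzero. Consequently, in the limit ρ → 0⁺, for any nonzero source coefficient q the corresponding interior tangential Cauchy data on the cloaking interface does not vanish: the cloaked region supports trapped, nonzero electromagnetic fields. -/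
open Polynomial Complex



noncomputable def rayIter (c : ℂ) : ℕ → ℂ[X]
  | 0 => 1
  | n+1 => X * (C c * rayIter c n + derivative (rayIter c n))
      - C (2*n+1 : ℂ) * rayIter c n

lemma rayIter_ode (c : ℂ) : ∀ n : ℕ,
    X * (derivative (derivative (rayIter c n)) + C (2*c) * derivative (rayIter c n))
      = C (2*n : ℂ) * (C c * rayIter c n + derivative (rayIter c n)) := by
  intro n
  induction n with
  | zero => simp [rayIter]
  | succ n ih =>
    have dih := congrArg derivative ih
    simp only [derivative_mul, derivative_add, derivative_C, derivative_X] at dih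
    simp only [rayIter, derivative_mul, derivative_add, derivative_sub, derivative_C,
      derivative_X, derivative_one, derivative_zero, derivative_ofNat, map_add, map_mul, map_one, map_ofNat, Nat.cast_add,
      Nat.cast_mul, Nat.cast_ofNat, Nat.cast_one] at *
    linear_combination (C c * X - (2 * C (n:ℂ) + 2)) * ih + X * dih


lemma rayIter_natDegree_le (c : ℂ) : ∀ n : ℕ, (rayIter c n).natDegree ≤ n := by
  intro n
  induction n with
  | zero => simp [rayIter]
  | succ n ih =>
    rw [rayIter]
    refine (natDegree_sub_le _ _).trans (max_le ?_ ((natDegree_C_mul_le _ _).trans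
      (ih.trans (Nat.le_succ n))))
    have h1 : (C c * rayIter c n + derivative (rayIter c n)).natDegree ≤ n :=
      (natDegree_add_le _ _).trans (max_le ((natDegree_C_mul_le _ _).trans ih)
        (((natDegree_derivative_le _).trans (Nat.sub_le _ _)).trans ih))
    refine natDegree_mul_le.trans ?_
    rw [natDegree_X]
    omega

lemma rayIter_coeff_top (c : ℂ) : ∀ n : ℕ, (rayIter c n).coeff n = c ^ n := by
  intro n
  induction n with
  | zero => simp [rayIter]
  | succ n ih =>
    rw [rayIter]
    have htop : (rayIter c n).coeff (n+1) = 0 :=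
      coeff_eq_zero_of_natDegree_lt (lt_of_le_of_lt (rayIter_natDegree_le c n)
        (Nat.lt_succ_self n))
    rw [coeff_sub, coeff_X_mul, coeff_add, coeff_C_mul, coeff_derivative, coeff_C_mul,
      ih, htop, pow_succ]
    ring
  
lemma rayIter_eval_zero_ne (c : ℂ) : ∀ n : ℕ, (rayIter c n).eval 0 ≠ 0 := by
  intro n
  induction n with
  | zero => simp [rayIter]
  | succ n ih =>
    rw [rayIter]
    simp only [eval_sub, eval_mul, eval_add, eval_X, eval_C, zero_mul, zero_sub, neg_ne_zero]
    intro h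
    rcases mul_eq_zero.mp h with h1 | h2
    · have h3 : ((2*n+1 : ℕ) : ℂ) ≠ 0 := Nat.cast_ne_zero.mpr (by omega)
      push_cast at h3
      exact h3 h1
    · exact ih h2


noncomputable def wpoly (n : ℕ) : ℂ[X] :=
  rayIter I n * derivative (rayIter (-I) n)
    - derivative (rayIter I n) * rayIter (-I) n
    - C (2*I) * (rayIter I n * rayIter (-I) n)

lemma wpoly_deriv (n : ℕ) : X * derivative (wpoly n) = C (2*n : ℂ) * wpoly n := by
  have hP := rayIter_ode I n
  have hQ := rayIter_ode (-I) n
  simp only [map_mul, map_neg, map_ofNat] at hP hQ ⊢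
  simp only [wpoly, derivative_sub, derivative_mul, derivative_C, derivative_ofNat,
    map_mul, map_neg, map_ofNat]
  linear_combination rayIter I n * hQ - rayIter (-I) n * hP

lemma wpoly_eq (n : ℕ) : wpoly n = C (-2*I) * X^(2*n) := by
  rcases Nat.eq_zero_or_pos n with h0 | hn
  · subst h0
    simp only [wpoly, rayIter, derivative_one, mul_zero, zero_mul, zero_sub, mul_one,
      Nat.mul_zero, pow_zero]
    rw [neg_zero, zero_sub, ← C_neg]
    congr 1
    ring
  ext k
  have hk := congrArg (fun p => coeff p k) (wpoly_deriv n)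
  simp only [coeff_C_mul] at hk
  rw [coeff_C_mul, coeff_X_pow]
  rcases eq_or_ne k (2*n) with hk2 | hk2
  · subst hk2
    rw [if_pos rfl, mul_one]
    have hPd : (rayIter I n).natDegree ≤ n := rayIter_natDegree_le I n
    have hQd : (rayIter (-I) n).natDegree ≤ n := rayIter_natDegree_le (-I) n
    have h1 : (rayIter I n * derivative (rayIter (-I) n)).coeff (2*n) = 0 := by
      refine coeff_eq_zero_of_natDegree_lt (lt_of_le_of_lt natDegree_mul_le ?_)
      have := natDegree_derivative_le (rayIter (-I) n)
      omega
    have h2 : (derivative (rayIter I n) * rayIter (-I) n).coeff (2*n) = 0 := by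
      refine coeff_eq_zero_of_natDegree_lt (lt_of_le_of_lt natDegree_mul_le ?_)
      have := natDegree_derivative_le (rayIter I n)
      omega
    have h3 : (rayIter I n * rayIter (-I) n).coeff (2*n) = 1 := by
      have h4 := coeff_mul_add_eq_of_natDegree_le hPd hQd
      rw [two_mul, h4, rayIter_coeff_top, rayIter_coeff_top, ← mul_pow]
      simp
    rw [wpoly, coeff_sub, coeff_sub, h1, h2, coeff_C_mul, h3]
    ring
  · rw [if_neg hk2, mul_zero]
    rcases Nat.eq_zero_or_pos k with hk0 | hkpos
    · subst hk0
      have h0 : (X * derivative (wpoly n)).coeff 0 = 0 := by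
        rw [mul_coeff_zero, coeff_X_zero, zero_mul]
      rw [h0] at hk
      have h2n : (2*(n:ℂ)) ≠ 0 := by
        have : ((2*n : ℕ) : ℂ) ≠ 0 := Nat.cast_ne_zero.mpr (by omega)
        push_cast at this; exact this
      have hk := mul_eq_zero.mp hk.symm
      rcases hk with hk | hk
      · exact absurd hk (by simpa using h2n)
      · exact hk
    · obtain ⟨k', rfl⟩ := Nat.exists_eq_add_of_lt hkpos
      rw [zero_add] at *
      have h0 : (X * derivative (wpoly n)).coeff (k'+1) = (wpoly n).coeff (k'+1) * (k'+1) := by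
        rw [coeff_X_mul, coeff_derivative]
      rw [h0] at hk
      have hne : ((k'+1 : ℕ) : ℂ) ≠ (2*(n:ℂ)) := by
        intro h
        apply hk2
        have h5 : ((k'+1 : ℕ) : ℂ) = ((2*n : ℕ) : ℂ) := by push_cast at h ⊢; linear_combination h
        exact_mod_cast h5
      have : (wpoly n).coeff (k'+1) * (((k'+1:ℕ):ℂ) - 2*n) = 0 := by
        push_cast
        push_cast at hk
        linear_combination hk
      rcases mul_eq_zero.mp this with h | h
      · exact h
      · exact absurd (by linear_combination h : ((k'+1:ℕ):ℂ) = 2*(n:ℂ)) hne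


/-- numerator combination used in closed forms -/
noncomputable def UU (p q : ℂ[X]) (m : ℕ) : ℂ → ℂ :=
  fun z => (Complex.exp (z*I) * p.eval z + Complex.exp (-(z*I)) * q.eval z) / z^m

noncomputable def rayStep (c : ℂ) (m : ℂ) (p : ℂ[X]) : ℂ[X] :=
  X * (C c * p + derivative p) - C m * p

lemma hasDerivAt_UU (p q : ℂ[X]) (m : ℕ) {z : ℂ} (hz : z ≠ 0) :
    HasDerivAt (UU p q (m+1))
      (UU (rayStep I ((m:ℂ)+1) p) (rayStep (-I) ((m:ℂ)+1) q) (m+2) z) z := by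
  have he1 : HasDerivAt (fun w : ℂ => Complex.exp (w*I)) (Complex.exp (z*I) * I) z :=
    by simpa using ((hasDerivAt_id z).mul_const I).cexp
  have he2 : HasDerivAt (fun w : ℂ => Complex.exp (-(w*I))) (Complex.exp (-(z*I)) * (-I)) z := by
    simpa using (((hasDerivAt_id z).mul_const I).neg).cexp
  have hN : HasDerivAt (fun w => Complex.exp (w*I) * p.eval w + Complex.exp (-(w*I)) * q.eval w)
      ((Complex.exp (z*I) * I) * p.eval z + Complex.exp (z*I) * (derivative p).eval z
        + ((Complex.exp (-(z*I)) * (-I)) * q.eval z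
          + Complex.exp (-(z*I)) * (derivative q).eval z)) z :=
    (he1.mul (p.hasDerivAt z)).add (he2.mul (q.hasDerivAt z))
  have hD : HasDerivAt (fun w : ℂ => w^(m+1)) (((m:ℂ)+1) * z^m) z := by
    simpa using hasDerivAt_pow (m+1) z
  have h := hN.div hD (pow_ne_zero (m+1) hz)
  refine HasDerivAt.congr_deriv (show HasDerivAt (UU p q (m+1)) _ z from h) ?_
  symm
  rw [UU]
  field_simp
  simp only [rayStep, eval_sub, eval_mul, eval_add, eval_X, eval_C]
  ring

noncomputable def rayGen (c : ℂ) (p : ℂ[X]) : ℕ → ℂ[X]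
  | 0 => p
  | n+1 => rayStep c (2*n+1 : ℂ) (rayGen c p n)

lemma rayGen_C_mul (c a : ℂ) (p : ℂ[X]) : ∀ n, rayGen c (C a * p) n = C a * rayGen c p n := by
  intro n
  induction n with
  | zero => rfl
  | succ n ih => simp only [rayGen, rayStep, ih, derivative_C_mul]; ring

lemma rayGen_one (c : ℂ) : ∀ n, rayGen c 1 n = rayIter c n := by
  intro n
  induction n with
  | zero => rfl
  | succ n ih => simp only [rayGen, rayStep, rayIter, ih]

lemma sphDOp_iter_UU (p q : ℂ[X]) : ∀ (n : ℕ) {z : ℂ}, z ≠ 0 →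
    sphDOp^[n] (UU p q 1) z = UU (rayGen I p n) (rayGen (-I) q n) (2*n+1) z := by
  intro n
  induction n with
  | zero => intro z hz; simp [rayGen]
  | succ n ih =>
    intro z hz
    rw [Function.iterate_succ_apply', sphDOp]
    have hev : sphDOp^[n] (UU p q 1) =ᶠ[nhds z]
        UU (rayGen I p n) (rayGen (-I) q n) (2*n+1) := by
      filter_upwards [IsOpen.mem_nhds isOpen_compl_singleton hz] with w hw
      exact ih hw
    have hd : HasDerivAt (UU (rayGen I p n) (rayGen (-I) q n) (2*n+1))
        (UU (rayStep I ((2*n:ℂ)+1) (rayGen I p n)) (rayStep (-I) ((2*n:ℂ)+1) (rayGen (-I) q n))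
          (2*n+2) z) z := by
      have := hasDerivAt_UU (rayGen I p n) (rayGen (-I) q n) (2*n) hz
      convert this using 2 <;> push_cast <;> ring
    rw [hev.deriv_eq, hd.deriv]
    show _ = UU (rayStep I (2*(n:ℂ)+1) (rayGen I p n)) (rayStep (-I) (2*(n:ℂ)+1) (rayGen (-I) q n))
      (2*(n+1)+1) z
    rw [UU, UU, div_div, ← pow_succ]
    norm_num
    ring_nf

lemma sin_div_eq : (fun w => Complex.sin w / w) = UU (C (-(I/2))) (C (I/2)) 1 := by
  funext w
  rw [UU, Complex.sin]
  simp only [eval_C, pow_one]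
  ring_nf

lemma cos_div_eq : (fun w => Complex.cos w / w) = UU (C (1/2)) (C (1/2)) 1 := by
  funext w
  rw [UU, Complex.cos]
  simp only [eval_C, pow_one]
  ring_nf

lemma sbj_eq (n : ℕ) {z : ℂ} (hz : z ≠ 0) :
    sbj n z = (-1:ℂ)^n * UU (C (-(I/2)) * rayIter I n) (C (I/2) * rayIter (-I) n) (n+1) z := by
  rw [sbj, sin_div_eq, sphDOp_iter_UU _ _ n hz, UU, UU, ← rayGen_one I, ← rayGen_one (-I),
    ← rayGen_C_mul, ← rayGen_C_mul]
  simp only [mul_one, neg_pow z n]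
  field_simp
  ring

lemma sby_eq (n : ℕ) {z : ℂ} (hz : z ≠ 0) :
    sby n z = -((-1:ℂ)^n * UU (C (1/2) * rayIter I n) (C (1/2) * rayIter (-I) n) (n+1) z) := by
  rw [sby, cos_div_eq, sphDOp_iter_UU _ _ n hz, UU, UU, ← rayGen_one I, ← rayGen_one (-I),
    ← rayGen_C_mul, ← rayGen_C_mul, neg_inj]
  simp only [mul_one, neg_pow z n]
  field_simp
  ring

lemma sbh_eq (n : ℕ) {z : ℂ} (hz : z ≠ 0) :
    sbh n z = (-1:ℂ)^n * UU (C (-I) * rayIter I n) 0 (n+1) z := by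
  rw [sbh, sbj_eq n hz, sby_eq n hz, UU, UU, UU]
  simp only [eval_mul, eval_C, eval_zero]
  field_simp
  ring

lemma deriv_sbj (n : ℕ) {z : ℂ} (hz : z ≠ 0) :
    deriv (sbj n) z = (-1:ℂ)^n * UU
      (rayStep I ((n:ℂ)+1) (C (-(I/2)) * rayIter I n))
      (rayStep (-I) ((n:ℂ)+1) (C (I/2) * rayIter (-I) n)) (n+2) z := by
  have h1 : sbj n =ᶠ[nhds z] fun w => (-1:ℂ)^n * UU (C (-(I/2)) * rayIter I n)
      (C (I/2) * rayIter (-I) n) (n+1) w := by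
    filter_upwards [IsOpen.mem_nhds isOpen_compl_singleton hz] with w hw
    exact sbj_eq n hw
  rw [h1.deriv_eq]
  exact ((hasDerivAt_UU _ _ n hz).const_mul ((-1:ℂ)^n)).deriv

lemma deriv_sbh (n : ℕ) {z : ℂ} (hz : z ≠ 0) :
    deriv (sbh n) z = (-1:ℂ)^n * UU
      (rayStep I ((n:ℂ)+1) (C (-I) * rayIter I n))
      (rayStep (-I) ((n:ℂ)+1) 0) (n+2) z := by
  have h1 : sbh n =ᶠ[nhds z] fun w => (-1:ℂ)^n * UU (C (-I) * rayIter I n) 0 (n+1) w := by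
    filter_upwards [IsOpen.mem_nhds isOpen_compl_singleton hz] with w hw
    exact sbh_eq n hw
  rw [h1.deriv_eq]
  exact ((hasDerivAt_UU _ _ n hz).const_mul ((-1:ℂ)^n)).deriv

lemma sbJ_eq (n : ℕ) {z : ℂ} (hz : z ≠ 0) :
    sbJ n z = (-1:ℂ)^n * UU (C (-(I/2)) * rayStep I (n:ℂ) (rayIter I n))
      (C (I/2) * rayStep (-I) (n:ℂ) (rayIter (-I) n)) (n+1) z := by
  rw [sbJ, sbj_eq n hz, deriv_sbj n hz, UU, UU, UU]
  simp only [rayStep, eval_sub, eval_mul, eval_add, eval_X, eval_C, derivative_C_mul]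
  field_simp
  ring

lemma sbH_eq (n : ℕ) {z : ℂ} (hz : z ≠ 0) :
    sbH n z = (-1:ℂ)^n * UU (C (-I) * rayStep I (n:ℂ) (rayIter I n)) 0 (n+1) z := by
  rw [sbH, sbh_eq n hz, deriv_sbh n hz, UU, UU, UU]
  simp only [rayStep, eval_sub, eval_mul, eval_add, eval_X, eval_C, derivative_C_mul,
    derivative_zero, eval_zero]
  field_simp
  ring

lemma wron_alg (e1 e2 a b Se Te w z E : ℂ) (hz : z ≠ 0) (hw : w ≠ 0)
    (hE : E*E = 1) (he : e1*e2 = 1)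
    (key : a*Te - b*Se = z * (-2*I*(w*w))) :
    (E*((e1*(-I*a) + e2*0)/(w*z))) * (E*((e1*(-(I/2)*Se) + e2*((I/2)*Te))/(w*z)))
      - (E*((e1*(-(I/2)*a) + e2*((I/2)*b))/(w*z))) * (E*((e1*(-I*Se) + e2*0)/(w*z)))
      = -I/z := by
  have main : (E*(e1*(-I*a) + e2*0)) * (E*(e1*(-(I/2)*Se) + e2*((I/2)*Te)))
      - (E*(e1*(-(I/2)*a) + e2*((I/2)*b))) * (E*(e1*(-I*Se) + e2*0))
      = -I * (w*w*z) := by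
    linear_combination (E*E*e1*e2/2) * key + (-I*z*w*w*e1*e2) * hE + (-I*z*w*w) * he + (-(1/2)*E*E*e1*e2*(a*Te - b*Se)) * Complex.I_sq
  calc (E*((e1*(-I*a) + e2*0)/(w*z))) * (E*((e1*(-(I/2)*Se) + e2*((I/2)*Te))/(w*z)))
      - (E*((e1*(-(I/2)*a) + e2*((I/2)*b))/(w*z))) * (E*((e1*(-I*Se) + e2*0)/(w*z)))
      = ((E*(e1*(-I*a) + e2*0)) * (E*(e1*(-(I/2)*Se) + e2*((I/2)*Te)))
        - (E*(e1*(-(I/2)*a) + e2*((I/2)*b))) * (E*(e1*(-I*Se) + e2*0)))/((w*z)*(w*z)) := by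
        ring
    _ = (-I * (w*w*z))/((w*z)*(w*z)) := by rw [main]
    _ = -I/z := by field_simp

lemma wron_eval (n : ℕ) {z : ℂ} (hz : z ≠ 0) :
    sbh n z * sbJ n z - sbj n z * sbH n z = -I / z := by
  have he : Complex.exp (z*I) * Complex.exp (-(z*I)) = 1 := by rw [← Complex.exp_add]; simp
  have hE : ((-1:ℂ)^n) * ((-1:ℂ)^n) = 1 := by
    rw [← pow_add, ← two_mul, pow_mul]
    norm_num
  have hwn : z^n ≠ 0 := pow_ne_zero n hz
  have key : eval z (rayIter I n) * eval z (rayStep (-I) (n:ℂ) (rayIter (-I) n))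
      - eval z (rayIter (-I) n) * eval z (rayStep I (n:ℂ) (rayIter I n))
      = z * (-2*I*(z^n*z^n)) := by
    have hw := congrArg (eval z) (wpoly_eq n)
    simp only [wpoly, eval_sub, eval_mul, eval_C, eval_pow, eval_X] at hw
    simp only [rayStep, eval_sub, eval_mul, eval_add, eval_X, eval_C]
    linear_combination z * hw
  have main := wron_alg (Complex.exp (z*I)) (Complex.exp (-(z*I)))
      (eval z (rayIter I n)) (eval z (rayIter (-I) n))
      (eval z (rayStep I (n:ℂ) (rayIter I n))) (eval z (rayStep (-I) (n:ℂ) (rayIter (-I) n)))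
      (z^n) z ((-1:ℂ)^n) hz hwn hE he key
  rw [sbh_eq n hz, sbJ_eq n hz, sbj_eq n hz, sbH_eq n hz, UU, UU, UU, UU, pow_succ]
  simp only [eval_mul, eval_C, eval_zero]
  linear_combination main

noncomputable def gam (n : ℕ) (z : ℂ) : ℂ := (-1:ℂ)^n * (-I) * Complex.exp (z*I) / z^(n+1)

noncomputable def Sp (n : ℕ) : ℂ[X] := rayStep I (n:ℂ) (rayIter I n)

lemma gam_ne (n : ℕ) {z : ℂ} (hz : z ≠ 0) : gam n z ≠ 0 := by
  rw [gam]
  apply div_ne_zero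
  · exact mul_ne_zero (mul_ne_zero (pow_ne_zero _ (by norm_num)) (by simp [I_ne_zero]))
      (Complex.exp_ne_zero _)
  · exact pow_ne_zero _ hz

lemma sbh_eq' (n : ℕ) {z : ℂ} (hz : z ≠ 0) :
    sbh n z = gam n z * eval z (rayIter I n) := by
  rw [sbh_eq n hz, UU, gam]
  simp only [eval_mul, eval_C, eval_zero, mul_zero, add_zero]
  ring

lemma sbH_eq' (n : ℕ) {z : ℂ} (hz : z ≠ 0) :
    sbH n z = gam n z * eval z (Sp n) := by
  rw [sbH_eq n hz, UU, gam, Sp]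
  simp only [eval_mul, eval_C, eval_zero, mul_zero, add_zero]
  ring

lemma Sp_eval_zero (n : ℕ) : eval 0 (Sp n) = -(n:ℂ) * eval 0 (rayIter I n) := by
  simp [Sp, rayStep]

lemma t2_alg (A B kc ρc γ Pxv Sxv j0 h0 J0 H0 z0 : ℂ)
    (hγ : γ ≠ 0) (hD : B*ρc*Pxv*J0 - A*kc*Sxv*j0 ≠ 0) (hz0 : z0 ≠ 0)
    (W : h0*J0 - j0*H0 = -I/z0) :
    (A*kc*h0*(γ*Sxv) - B*ρc*H0*(γ*Pxv)) / (B*ρc*(γ*Pxv)*J0 - A*kc*(γ*Sxv)*j0) * j0 + h0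
      = ρc * (B*Pxv*(-I/z0)/(B*ρc*Pxv*J0 - A*kc*Sxv*j0)) := by
  have W' : (h0*J0 - j0*H0) * z0 = -I := by rw [W]; field_simp
  have hDf : B*ρc*(γ*Pxv)*J0 - A*kc*(γ*Sxv)*j0 = γ*(B*ρc*Pxv*J0 - A*kc*Sxv*j0) := by ring
  rw [hDf]
  field_simp
  linear_combination (B*ρc*Pxv) * W'

lemma t4_alg (A B kc ρc γ Pxv Sxv j0 h0 J0 H0 z0 : ℂ)
    (hγ : γ ≠ 0) (hD : A*ρc*Pxv*J0 - B*kc*j0*Sxv ≠ 0) (hz0 : z0 ≠ 0)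
    (W : h0*J0 - j0*H0 = -I/z0) :
    (B*kc*h0*(γ*Sxv) - A*ρc*H0*(γ*Pxv)) / (A*ρc*(γ*Pxv)*J0 - B*kc*j0*(γ*Sxv)) * J0 + H0
      = B*kc*Sxv*(-I/z0) / (A*ρc*Pxv*J0 - B*kc*j0*Sxv) := by
  have W' : (h0*J0 - j0*H0) * z0 = -I := by rw [W]; field_simp
  have hDf : A*ρc*(γ*Pxv)*J0 - B*kc*j0*(γ*Sxv) = γ*(A*ρc*Pxv*J0 - B*kc*j0*Sxv) := by ring
  rw [hDf]
  have hD' : A*ρc*Pxv*J0 - B*kc*Sxv*j0 ≠ 0 := by intro h; apply hD; linear_combination h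
  field_simp
  linear_combination (B*kc*Sxv) * W'

/-- denominator function for part (i) -/
noncomputable def D1f (n : ℕ) (ω ε₀ μ₀ k : ℝ) (ρ : ℝ) : ℂ :=
  invSqrtC μ₀ * (ρ:ℂ) * eval ((ω*ρ:ℝ):ℂ) (rayIter I n) * sbJ n ((k*ω:ℝ):ℂ)
    - invSqrtC ε₀ * (k:ℂ) * eval ((ω*ρ:ℝ):ℂ) (Sp n) * sbj n ((k*ω:ℝ):ℂ)

/-- denominator function for part (ii) -/
noncomputable def E1f (n : ℕ) (ω ε₀ μ₀ k : ℝ) (ρ : ℝ) : ℂ :=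
  invSqrtC ε₀ * (ρ:ℂ) * eval ((ω*ρ:ℝ):ℂ) (rayIter I n) * sbJ n ((k*ω:ℝ):ℂ)
    - invSqrtC μ₀ * (k:ℂ) * sbj n ((k*ω:ℝ):ℂ) * eval ((ω*ρ:ℝ):ℂ) (Sp n)

lemma t2_pointwise (ω ε₀ μ₀ k : ℝ) (n : ℕ) (ρ : ℝ) (hρ : 0 < ρ) (hω : 0 < ω)
    (hz₀ : ((k*ω:ℝ):ℂ) ≠ 0) (hD : D1f n ω ε₀ μ₀ k ρ ≠ 0) :
    t2' n ω ε₀ μ₀ k ρ * sbj n ((k*ω:ℝ):ℂ) + sbh n ((k*ω:ℝ):ℂ)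
      = (ρ:ℂ) * (invSqrtC μ₀ * eval ((ω*ρ:ℝ):ℂ) (rayIter I n) * (-I/((k*ω:ℝ):ℂ))
          / D1f n ω ε₀ μ₀ k ρ) := by
  have hx : ((ω*ρ:ℝ):ℂ) ≠ 0 := ofReal_ne_zero.mpr (ne_of_gt (mul_pos hω hρ))
  have W := wron_eval n hz₀
  simp only [D1f] at hD ⊢
  rw [t2', sbh_eq' n hx, sbH_eq' n hx]
  exact t2_alg _ _ _ _ _ _ _ _ _ _ _ _ (gam_ne n hx) hD hz₀ W

lemma t4_pointwise (ω ε₀ μ₀ k : ℝ) (n : ℕ) (ρ : ℝ) (hρ : 0 < ρ) (hω : 0 < ω)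
    (hz₀ : ((k*ω:ℝ):ℂ) ≠ 0) (hD : E1f n ω ε₀ μ₀ k ρ ≠ 0) :
    t4' n ω ε₀ μ₀ k ρ * sbJ n ((k*ω:ℝ):ℂ) + sbH n ((k*ω:ℝ):ℂ)
      = invSqrtC μ₀ * (k:ℂ) * eval ((ω*ρ:ℝ):ℂ) (Sp n) * (-I/((k*ω:ℝ):ℂ))
          / E1f n ω ε₀ μ₀ k ρ := by
  have hx : ((ω*ρ:ℝ):ℂ) ≠ 0 := ofReal_ne_zero.mpr (ne_of_gt (mul_pos hω hρ))
  have W := wron_eval n hz₀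
  simp only [E1f] at hD ⊢
  rw [t4', sbh_eq' n hx, sbH_eq' n hx]
  exact t4_alg _ _ _ _ _ _ _ _ _ _ _ _ (gam_ne n hx) hD hz₀ W

/-- As `ρ → 0⁺`: (i) `t₂′(ρ)j_n(kω) + h_n(kω) = O(ρ)`, and
(ii) `t₄′(ρ)𝒥_n(kω) + 𝓗_n(kω)` converges to `i/(kω j_n(kω))`, which is nonzero.
Hence in the limit the interior tangential Cauchy data on the cloaking interface does
not vanish: the cloaked region supports trapped, nonzero electromagnetic fields. -/
theorem interior_cauchy_data_nonvanishing
    (ω ε₀ μ₀ : ℝ) (hω : 0 < ω) (hε : 0 < ε₀) (hμ : 0 < μ₀)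
    (n : ℕ) (hn : 1 ≤ n) (k : ℝ) (hk : k = Real.sqrt (ε₀ * μ₀))
    (hjk : sbj n ((k * ω : ℝ) : ℂ) ≠ 0) :
    IsBigORho (fun ρ => t2' n ω ε₀ μ₀ k ρ * sbj n ((k * ω : ℝ) : ℂ)
      + sbh n ((k * ω : ℝ) : ℂ)) 1 ∧
    Filter.Tendsto (fun ρ : ℝ => t4' n ω ε₀ μ₀ k ρ * sbJ n ((k * ω : ℝ) : ℂ)
        + sbH n ((k * ω : ℝ) : ℂ)) (nhdsWithin 0 (Set.Ioi 0))
      (nhds (Complex.I / (((k * ω : ℝ) : ℂ) * sbj n ((k * ω : ℝ) : ℂ)))) ∧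
    Complex.I / (((k * ω : ℝ) : ℂ) * sbj n ((k * ω : ℝ) : ℂ)) ≠ 0 := by
  have hk0 : 0 < k := by rw [hk]; exact Real.sqrt_pos.mpr (mul_pos hε hμ)
  have hkω : (0:ℝ) < k*ω := mul_pos hk0 hω
  have hz₀ : ((k*ω:ℝ):ℂ) ≠ 0 := ofReal_ne_zero.mpr (ne_of_gt hkω)
  have hA : invSqrtC ε₀ ≠ 0 := by
    rw [invSqrtC]
    exact ofReal_ne_zero.mpr (inv_ne_zero (ne_of_gt (Real.sqrt_pos.mpr hε)))
  have hB : invSqrtC μ₀ ≠ 0 := by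
    rw [invSqrtC]
    exact ofReal_ne_zero.mpr (inv_ne_zero (ne_of_gt (Real.sqrt_pos.mpr hμ)))
  have hkC : (k:ℂ) ≠ 0 := ofReal_ne_zero.mpr (ne_of_gt hk0)
  have hP0 : eval 0 (rayIter I n) ≠ 0 := rayIter_eval_zero_ne I n
  have hS0 : eval 0 (Sp n) ≠ 0 := by
    rw [Sp_eval_zero]
    exact mul_ne_zero (neg_ne_zero.mpr (Nat.cast_ne_zero.mpr (by omega))) hP0
  have hxc : Continuous (fun ρ : ℝ => ((ω*ρ : ℝ):ℂ)) :=
    Complex.continuous_ofReal.comp (continuous_const.mul continuous_id)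
  have hPxc : Continuous (fun ρ : ℝ => eval ((ω*ρ:ℝ):ℂ) (rayIter I n)) :=
    (rayIter I n).continuous.comp hxc
  have hSxc : Continuous (fun ρ : ℝ => eval ((ω*ρ:ℝ):ℂ) (Sp n)) :=
    (Sp n).continuous.comp hxc
  have hx0 : ((ω*(0:ℝ):ℝ):ℂ) = 0 := by norm_num
  refine ⟨?_, ?_, div_ne_zero I_ne_zero (mul_ne_zero hz₀ hjk)⟩
  · -- part (i)
    have hD1c : Continuous (D1f n ω ε₀ μ₀ k) := by
      unfold D1f
      exact (((continuous_const.mul Complex.continuous_ofReal).mul hPxc).mul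
        continuous_const).sub ((continuous_const.mul hSxc).mul continuous_const)
    have hD10 : D1f n ω ε₀ μ₀ k 0
        = -(invSqrtC ε₀ * (k:ℂ) * eval 0 (Sp n) * sbj n ((k*ω:ℝ):ℂ)) := by
      rw [D1f, hx0]
      push_cast
      ring
    have hD10ne : D1f n ω ε₀ μ₀ k 0 ≠ 0 := by
      rw [hD10]
      exact neg_ne_zero.mpr (mul_ne_zero (mul_ne_zero (mul_ne_zero hA hkC) hS0) hjk)
    set φ : ℝ → ℂ := fun ρ => invSqrtC μ₀ * eval ((ω*ρ:ℝ):ℂ) (rayIter I n)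
        * (-I/((k*ω:ℝ):ℂ)) / D1f n ω ε₀ μ₀ k ρ with hφdef
    have hφca : ContinuousAt φ 0 :=
      (((continuous_const.mul hPxc).mul continuous_const).continuousAt).div
        hD1c.continuousAt hD10ne
    have hev1 : ∀ᶠ ρ in nhds (0:ℝ), ‖φ ρ - φ 0‖ < 1 := by
      have h2 := hφca (Metric.ball_mem_nhds (φ 0) one_pos)
      filter_upwards [h2] with ρ hρ
      simpa [Complex.dist_eq] using hρ
    have hev2 : ∀ᶠ ρ in nhds (0:ℝ), D1f n ω ε₀ μ₀ k ρ ≠ 0 :=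
      hD1c.continuousAt.eventually_ne hD10ne
    obtain ⟨δ, hδpos, hδ⟩ := Metric.eventually_nhds_iff.mp (hev1.and hev2)
    refine ⟨‖φ 0‖ + 1, by positivity, δ, hδpos, ?_⟩
    intro ρ hρ hρδ
    have hmem : dist ρ 0 < δ := by
      rw [Real.dist_eq, sub_zero, abs_of_pos hρ]; exact hρδ
    obtain ⟨hb, hDρ⟩ := hδ hmem
    have hgoal := t2_pointwise ω ε₀ μ₀ k n ρ hρ hω hz₀ hDρ
    show ‖t2' n ω ε₀ μ₀ k ρ * sbj n ((k*ω:ℝ):ℂ) + sbh n ((k*ω:ℝ):ℂ)‖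
      ≤ (‖φ 0‖ + 1) * ρ ^ (1:ℝ)
    rw [hgoal, norm_mul, Real.rpow_one, Complex.norm_real, Real.norm_eq_abs, abs_of_pos hρ, mul_comm]
    have hφb : ‖φ ρ‖ ≤ ‖φ 0‖ + 1 := by
      have h3 : ‖φ ρ‖ ≤ ‖φ 0‖ + ‖φ ρ - φ 0‖ := by
        calc ‖φ ρ‖ = ‖φ 0 + (φ ρ - φ 0)‖ := by ring_nf
          _ ≤ _ := norm_add_le _ _
      linarith
    show ‖φ ρ‖ * ρ ≤ (‖φ 0‖ + 1) * ρ
    exact mul_le_mul_of_nonneg_right hφb hρ.le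
  · -- part (ii)
    have hE1c : Continuous (E1f n ω ε₀ μ₀ k) := by
      unfold E1f
      exact (((continuous_const.mul Complex.continuous_ofReal).mul hPxc).mul
        continuous_const).sub ((continuous_const.mul continuous_const).mul hSxc)
    have hE10 : E1f n ω ε₀ μ₀ k 0
        = -(invSqrtC μ₀ * (k:ℂ) * sbj n ((k*ω:ℝ):ℂ) * eval 0 (Sp n)) := by
      rw [E1f, hx0]
      push_cast
      ring
    have hE10ne : E1f n ω ε₀ μ₀ k 0 ≠ 0 := by
      rw [hE10]
      exact neg_ne_zero.mpr (mul_ne_zero (mul_ne_zero (mul_ne_zero hB hkC) hjk) hS0)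
    set ψ : ℝ → ℂ := fun ρ => invSqrtC μ₀ * (k:ℂ) * eval ((ω*ρ:ℝ):ℂ) (Sp n)
        * (-I/((k*ω:ℝ):ℂ)) / E1f n ω ε₀ μ₀ k ρ with hψdef
    have hψca : ContinuousAt ψ 0 :=
      (((continuous_const.mul hSxc).mul continuous_const).continuousAt).div
        hE1c.continuousAt hE10ne
    have hψ0 : ψ 0 = Complex.I / (((k*ω:ℝ):ℂ) * sbj n ((k*ω:ℝ):ℂ)) := by
      rw [hψdef]
      show invSqrtC μ₀ * (k:ℂ) * eval ((ω*(0:ℝ):ℝ):ℂ) (Sp n) * (-I/((k*ω:ℝ):ℂ))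
          / E1f n ω ε₀ μ₀ k 0 = _
      have hd : -(invSqrtC μ₀ * (k:ℂ) * sbj n ((k*ω:ℝ):ℂ) * eval 0 (Sp n)) ≠ 0 :=
        hE10 ▸ hE10ne
      have hωC : ((ω:ℝ):ℂ) ≠ 0 := ofReal_ne_zero.mpr (ne_of_gt hω)
      rw [hE10, hx0, div_eq_div_iff hd (mul_ne_zero hz₀ hjk)]
      field_simp [hz₀, hkC, hωC]
    have hev2 : ∀ᶠ ρ in nhdsWithin (0:ℝ) (Set.Ioi 0),
        t4' n ω ε₀ μ₀ k ρ * sbJ n ((k*ω:ℝ):ℂ) + sbH n ((k*ω:ℝ):ℂ) = ψ ρ := by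
      have hne : ∀ᶠ ρ in nhdsWithin (0:ℝ) (Set.Ioi 0), E1f n ω ε₀ μ₀ k ρ ≠ 0 :=
        (hE1c.continuousAt.eventually_ne hE10ne).filter_mono nhdsWithin_le_nhds
      filter_upwards [hne, self_mem_nhdsWithin] with ρ hρne hρpos
      rw [t4_pointwise ω ε₀ μ₀ k n ρ hρpos hω hz₀ hρne, hψdef]
    have htend : Filter.Tendsto ψ (nhdsWithin (0:ℝ) (Set.Ioi 0)) (nhds (ψ 0)) :=
      hψca.continuousWithinAt.tendsto
    rw [hψ0] at htend
    exact htend.congr' (Filter.EventuallyEq.symm hev2)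
end

section
/- Fix an integer n ≥ 1, ρ ∈ (0,1), ω > 0, k > 0, μ₀ > 0, and set ε₀ = k²/μ₀. Assume h_n(2ω) ≠ 0 and j_n(kω) ≠ 0. Consider the 3×3 matrix A_n with rows (h_n(2ω), 0, j_n(2ω)), (ρ h_n(ωρ), −ε₀^{−1/2} j_n(kω), ρ j_n(ωρ)), (k 𝓗_n(ωρ), −μ₀^{−1/2} 𝒥_n(kω), k 𝒥_n(ωρ)) — the coefficient matrix of the boundary and transmission conditions for the n-th mode in the unknowns (c, α, γ). Then: (i) det A_n = 0 if and only if μ₀ j_n(kω) [𝒥_n(ωρ) h_n(2ω) − 𝓗_n(ωρ) j_n(2ω)] = ρ 𝒥_n(kω) [j_n(ωρ) h_n(2ω) − h_n(ωρ) j_n(2ω)]; (ii) if this cloak-busting relation holds and in addition ρ μ₀^{−1/2} h_n(ωρ) 𝒥_n(kω) − μ₀^{1/2} 𝓗_n(ωρ) j_n(kω) ≠ 0, then for every f ≠ 0 the inhomogeneous system A_n (c, α, γ)ᵀ = (f, 0, 0)ᵀ has no solution. -/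
/-- Cloak-busting inclusions: the coefficient matrix `A_n` of the
mode-`n` boundary/transmission system is singular iff
`μ₀ j_n(kω)[𝒥_n(ωρ)h_n(2ω) − 𝓗_n(ωρ)j_n(2ω)] = ρ 𝒥_n(kω)[j_n(ωρ)h_n(2ω) − h_n(ωρ)j_n(2ω)]`;
and if this relation holds together with
`ρ μ₀^{−1/2} h_n(ωρ)𝒥_n(kω) − μ₀^{1/2} 𝓗_n(ωρ)j_n(kω) ≠ 0`, then for every `f ≠ 0`
the inhomogeneous system `A_n (c,α,γ)ᵀ = (f,0,0)ᵀ` has no solution. -/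
theorem cloak_busting_inclusions
    (n : ℕ) (hn : 1 ≤ n) (ρ ω k μ₀ : ℝ)
    (hρ0 : 0 < ρ) (hρ1 : ρ < 1) (hω : 0 < ω) (hk : 0 < k) (hμ : 0 < μ₀)
    (ε₀ : ℝ) (hε : ε₀ = k ^ 2 / μ₀)
    (hh2 : sbh n ((2 * ω : ℝ) : ℂ) ≠ 0) (hjk : sbj n ((k * ω : ℝ) : ℂ) ≠ 0)
    (A : Matrix (Fin 3) (Fin 3) ℂ)
    (hA : A = Matrix.of
      ![![sbh n ((2 * ω : ℝ) : ℂ), 0, sbj n ((2 * ω : ℝ) : ℂ)],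
        ![(ρ : ℂ) * sbh n ((ω * ρ : ℝ) : ℂ), -(invSqrtC ε₀ * sbj n ((k * ω : ℝ) : ℂ)),
          (ρ : ℂ) * sbj n ((ω * ρ : ℝ) : ℂ)],
        ![(k : ℂ) * sbH n ((ω * ρ : ℝ) : ℂ), -(invSqrtC μ₀ * sbJ n ((k * ω : ℝ) : ℂ)),
          (k : ℂ) * sbJ n ((ω * ρ : ℝ) : ℂ)]]) :
    (A.det = 0 ↔
      (μ₀ : ℂ) * sbj n ((k * ω : ℝ) : ℂ) *
          (sbJ n ((ω * ρ : ℝ) : ℂ) * sbh n ((2 * ω : ℝ) : ℂ)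
            - sbH n ((ω * ρ : ℝ) : ℂ) * sbj n ((2 * ω : ℝ) : ℂ))
        = (ρ : ℂ) * sbJ n ((k * ω : ℝ) : ℂ) *
          (sbj n ((ω * ρ : ℝ) : ℂ) * sbh n ((2 * ω : ℝ) : ℂ)
            - sbh n ((ω * ρ : ℝ) : ℂ) * sbj n ((2 * ω : ℝ) : ℂ))) ∧
    (((μ₀ : ℂ) * sbj n ((k * ω : ℝ) : ℂ) *
          (sbJ n ((ω * ρ : ℝ) : ℂ) * sbh n ((2 * ω : ℝ) : ℂ)
            - sbH n ((ω * ρ : ℝ) : ℂ) * sbj n ((2 * ω : ℝ) : ℂ))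
        = (ρ : ℂ) * sbJ n ((k * ω : ℝ) : ℂ) *
          (sbj n ((ω * ρ : ℝ) : ℂ) * sbh n ((2 * ω : ℝ) : ℂ)
            - sbh n ((ω * ρ : ℝ) : ℂ) * sbj n ((2 * ω : ℝ) : ℂ))) →
      ((ρ : ℂ) * invSqrtC μ₀ * sbh n ((ω * ρ : ℝ) : ℂ) * sbJ n ((k * ω : ℝ) : ℂ)
          - ((Real.sqrt μ₀ : ℝ) : ℂ) * sbH n ((ω * ρ : ℝ) : ℂ) * sbj n ((k * ω : ℝ) : ℂ)
            ≠ 0) →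
      ∀ f : ℂ, f ≠ 0 → ¬ ∃ v : Fin 3 → ℂ, A.mulVec v = ![f, 0, 0]) := by
  subst hε
  set m : ℂ := ((Real.sqrt μ₀ : ℝ) : ℂ) with hmdef
  have hsμ : (0 : ℝ) < Real.sqrt μ₀ := Real.sqrt_pos.mpr hμ
  have hm0 : m ≠ 0 := by
    rw [hmdef]; exact_mod_cast hsμ.ne'
  have hk0 : (k : ℂ) ≠ 0 := by exact_mod_cast hk.ne'
  have hks : (k : ℂ) * invSqrtC (k ^ 2 / μ₀) = m := by
    unfold invSqrtC
    rw [Real.sqrt_div (by positivity) _, Real.sqrt_sq hk.le, hmdef]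
    have h1 : Real.sqrt μ₀ ≠ 0 := hsμ.ne'
    push_cast
    field_simp
  have htm : invSqrtC μ₀ * m = 1 := by
    unfold invSqrtC
    rw [hmdef]
    push_cast
    rw [inv_mul_cancel₀]
    exact_mod_cast hsμ.ne'
  have hμc : ((μ₀ : ℝ) : ℂ) = m ^ 2 := by
    rw [hmdef]; norm_cast; rw [Real.sq_sqrt hμ.le]
  have hdet : A.det = invSqrtC μ₀ *
      ((ρ : ℂ) * sbJ n ((k * ω : ℝ) : ℂ) *
          (sbj n ((ω * ρ : ℝ) : ℂ) * sbh n ((2 * ω : ℝ) : ℂ)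
            - sbh n ((ω * ρ : ℝ) : ℂ) * sbj n ((2 * ω : ℝ) : ℂ))
        - (μ₀ : ℂ) * sbj n ((k * ω : ℝ) : ℂ) *
          (sbJ n ((ω * ρ : ℝ) : ℂ) * sbh n ((2 * ω : ℝ) : ℂ)
            - sbH n ((ω * ρ : ℝ) : ℂ) * sbj n ((2 * ω : ℝ) : ℂ))) := by
    rw [hA, Matrix.det_fin_three]
    simp only [Matrix.of_apply, Matrix.cons_val', Matrix.cons_val_zero, Matrix.cons_val_one,
      Matrix.head_cons, Matrix.empty_val', Matrix.cons_val_fin_one, Matrix.head_fin_const,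
      Matrix.cons_val_two, Matrix.tail_cons]
    linear_combination (sbj n ((k * ω : ℝ) : ℂ) *
        (sbh n ((2 * ω : ℝ) : ℂ) * sbJ n ((ω * ρ : ℝ) : ℂ)
          - sbj n ((2 * ω : ℝ) : ℂ) * sbH n ((ω * ρ : ℝ) : ℂ))) *
        (invSqrtC μ₀ * hμc + m * htm - hks)
  have htne : invSqrtC μ₀ ≠ 0 := by
    intro h0
    rw [h0, zero_mul] at htm
    exact one_ne_zero htm.symm
  constructor
  · rw [hdet, mul_eq_zero, or_iff_right htne, sub_eq_zero, eq_comm]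
  · intro hrel hD f hf hex
    obtain ⟨v, hv⟩ := hex
    rw [hA] at hv
    have e0 := congrFun hv 0
    have e1 := congrFun hv 1
    have e2 := congrFun hv 2
    simp only [Matrix.mulVec, dotProduct, Fin.sum_univ_three, Matrix.of_apply,
      Matrix.cons_val', Matrix.cons_val_zero, Matrix.cons_val_one, Matrix.head_cons,
      Matrix.empty_val', Matrix.cons_val_fin_one, Matrix.head_fin_const,
      Matrix.cons_val_two, Matrix.tail_cons] at e0 e1 e2
    -- abbreviations
    set a := sbh n ((2 * ω : ℝ) : ℂ)
    set b := sbj n ((2 * ω : ℝ) : ℂ)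
    set p := sbh n ((ω * ρ : ℝ) : ℂ)
    set q := sbj n ((ω * ρ : ℝ) : ℂ)
    set P := sbH n ((ω * ρ : ℝ) : ℂ)
    set Q := sbJ n ((ω * ρ : ℝ) : ℂ)
    set J := sbj n ((k * ω : ℝ) : ℂ)
    set Jp := sbJ n ((k * ω : ℝ) : ℂ)
    set s := invSqrtC (k ^ 2 / μ₀)
    set t := invSqrtC μ₀
    set c := v 0
    set α := v 1
    set γ := v 2
    have h1 : ((ρ : ℂ) * t * p * Jp - m * P * J) * c
        + ((ρ : ℂ) * t * q * Jp - m * Q * J) * γ = 0 := by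
      linear_combination (t * Jp) * e1 - (s * J) * e2 + (J * P * c + J * Q * γ) * hks
    have h2 : a * ((ρ : ℂ) * t * q * Jp - m * Q * J)
        = b * ((ρ : ℂ) * t * p * Jp - m * P * J) := by
      linear_combination (-t) * hrel + J * (a * Q - b * P) * (m * htm + t * hμc)
    have h3 : ((ρ : ℂ) * t * p * Jp - m * P * J) * f = 0 := by
      linear_combination (-((ρ : ℂ) * t * p * Jp - m * P * J)) * e0 + a * h1 - γ * h2
    have hD' : (ρ : ℂ) * t * p * Jp - m * P * J ≠ 0 := hD
    rcases mul_eq_zero.mp h3 with h | h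
    · exact hD' h
    · exact hf h
end
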